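/- arXiv:1511.05631 — 2 statements merged into one kernel-verified Lean document; each statement's English description precedes it below -/
import Mathlib

section
/- Let E be a sublinear expectation on the space X of bounded measurable real-valued functions on (Ω, F). For every ξ ∈ X and every constant λ ∈ [−E(−ξ), E(ξ)], one has E((ξ − λ)²) ≤ E((ξ − E(ξ))²) + (E(ξ) + E(−ξ))². -/
open MeasureTheory Set Filter Topology Classical

/-- The space of bounded measurable real-valued functions on `Ω`, as a submodule of `Ω → ℝ`. -/
def BM (Ω : Type*) [MeasurableSpace Ω] : Submodule ℝ (Ω → ℝ) where
  carrier := {f | Measurable f ∧ ∃ M : ℝ, ∀ ω, |f ω| ≤ M}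
  zero_mem' := ⟨measurable_const, 0, by simp⟩
  add_mem' := by
    rintro f g ⟨hf, Mf, hMf⟩ ⟨hg, Mg, hMg⟩
    exact ⟨hf.add hg, Mf + Mg, fun ω => (abs_add_le _ _).trans (add_le_add (hMf ω) (hMg ω))⟩
  smul_mem' := by
    rintro c f ⟨hf, Mf, hMf⟩
    refine ⟨hf.const_smul c, |c| * Mf, fun ω => ?_⟩
    simp only [Pi.smul_apply, smul_eq_mul, abs_mul]
    exact mul_le_mul_of_nonneg_left (hMf ω) (abs_nonneg c)

variable {Ω : Type*} [MeasurableSpace Ω]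

lemma mem_BM {f : Ω → ℝ} (hf : Measurable f) (M : ℝ) (hM : ∀ ω, |f ω| ≤ M) : f ∈ BM Ω :=
  ⟨hf, M, hM⟩

lemma BM.measurable (ξ : BM Ω) : Measurable (ξ : Ω → ℝ) := ξ.2.1

lemma BM.bounded (ξ : BM Ω) : ∃ M : ℝ, ∀ ω, |(ξ : Ω → ℝ) ω| ≤ M := ξ.2.2

/-- A sublinear expectation on the space of bounded measurable functions. -/
structure SLE (Ω : Type*) [MeasurableSpace Ω] where
  E : BM Ω → ℝ
  mono : ∀ ξ η : BM Ω, (∀ ω, (η : Ω → ℝ) ω ≤ (ξ : Ω → ℝ) ω) → E η ≤ E ξ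
  const_preserve : ∀ (c : ℝ) (h : (fun _ : Ω => c) ∈ BM Ω), E ⟨fun _ => c, h⟩ = c
  subadd : ∀ ξ η : BM Ω, E (ξ + η) ≤ E ξ + E η
  pos_homog : ∀ (c : ℝ), 0 ≤ c → ∀ ξ : BM Ω, E (c • ξ) = c * E ξ

/-- The constant function as an element of `BM Ω`. -/
def constBM (Ω : Type*) [MeasurableSpace Ω] (c : ℝ) : BM Ω :=
  ⟨fun _ => c, mem_BM measurable_const |c| fun _ => le_refl _⟩

/-- The indicator function of a measurable set as an element of `BM Ω`. -/
noncomputable def indBM {Ω : Type*} [MeasurableSpace Ω] (A : Set Ω) (hA : MeasurableSet A) : BM Ω :=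
  ⟨A.indicator fun _ => 1,
    mem_BM (measurable_const.indicator hA) 1 fun ω => by
      by_cases h : ω ∈ A <;> simp [Set.indicator_apply, h]⟩

/-- The product of two bounded measurable functions. -/
noncomputable def mulBM (ξ η : BM Ω) : BM Ω := by
  refine ⟨fun ω => (ξ : Ω → ℝ) ω * (η : Ω → ℝ) ω, ?_⟩
  obtain ⟨Mf, hMf⟩ := BM.bounded ξ
  obtain ⟨Mg, hMg⟩ := BM.bounded η
  refine mem_BM ((BM.measurable ξ).mul (BM.measurable η)) (max Mf 0 * max Mg 0) fun ω => ?_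
  rw [abs_mul]
  exact mul_le_mul ((hMf ω).trans (le_max_left _ _)) ((hMg ω).trans (le_max_left _ _))
    (abs_nonneg _) (le_max_right _ _)

/-- The upper capacity associated to a sublinear expectation: `C(A) = E(1_A)` for measurable `A`
(junk value `0` on non-measurable sets). -/
noncomputable def SLE.cap (𝔼 : SLE Ω) (A : Set Ω) : ℝ :=
  if h : MeasurableSet A then 𝔼.E (indBM A h) else 0

/-- The lower capacity associated to a sublinear expectation: `c(A) = -E(-1_A)` for measurable `A`
(junk value `0` on non-measurable sets). -/
noncomputable def SLE.lcap (𝔼 : SLE Ω) (A : Set Ω) : ℝ :=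
  if h : MeasurableSet A then -𝔼.E (-(indBM A h)) else 0

/-- A linear expectation dominated by the sublinear expectation `𝔼`. -/
def Dominated (𝔼 : SLE Ω) (L : BM Ω →ₗ[ℝ] ℝ) : Prop := ∀ ξ : BM Ω, L ξ ≤ 𝔼.E ξ

/-- `ξ` and `η` are uncorrelated with respect to `𝔼` if `L(ξη) = L(ξ)L(η)` for every
linear expectation `L` dominated by `𝔼`. -/
def Uncorrelated (𝔼 : SLE Ω) (ξ η : BM Ω) : Prop :=
  ∀ L : BM Ω →ₗ[ℝ] ℝ, Dominated 𝔼 L → L (mulBM ξ η) = L ξ * L η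

/-- `𝔼` is regular: if `ξ n ↓ 0` pointwise then `𝔼.E (ξ n) ↓ 0`. -/
def SLE.Regular (𝔼 : SLE Ω) : Prop :=
  ∀ ξ : ℕ → BM Ω, (∀ ω, Antitone fun n => (ξ n : Ω → ℝ) ω) →
    (∀ ω, Tendsto (fun n => (ξ n : Ω → ℝ) ω) atTop (𝓝 0)) →
    Tendsto (fun n => 𝔼.E (ξ n)) atTop (𝓝 0)

/-- The σ-field generated by `ξ a, …, ξ b`. -/
def sigmaGen (ξ : ℕ → BM Ω) (a b : ℕ) : MeasurableSpace Ω :=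
  ⨆ i ∈ Set.Icc a b, MeasurableSpace.comap (fun ω => (ξ i : Ω → ℝ) ω) inferInstance

/-- `{ξ_n}_{n ≥ 1}` is an independent sequence under `𝔼`: pairwise uncorrelated, and
`C(A ∩ B) ≤ C(A) C(B)` whenever `A ∈ σ(ξ_1, …, ξ_m)` and `B ∈ σ(ξ_{m+1}, …, ξ_n)`, `m < n`. -/
def IndepSeq (𝔼 : SLE Ω) (ξ : ℕ → BM Ω) : Prop :=
  (∀ i j, 1 ≤ i → 1 ≤ j → i ≠ j → Uncorrelated 𝔼 (ξ i) (ξ j)) ∧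
  ∀ m n : ℕ, 1 ≤ m → m < n → ∀ A B : Set Ω,
    MeasurableSet[sigmaGen ξ 1 m] A → MeasurableSet[sigmaGen ξ (m + 1) n] B →
    𝔼.cap (A ∩ B) ≤ 𝔼.cap A * 𝔼.cap B

/-- Assumption (H₀): for every disjoint measurable cover `{A_n}` of `Ω`,
the series `Σ C(A_n)` has bounded partial sums. -/
def H0 (𝔼 : SLE Ω) : Prop :=
  ∀ A : ℕ → Set Ω, (∀ n, MeasurableSet (A n)) → Pairwise (Function.onFun Disjoint A) →
    (⋃ n, A n) = Set.univ → ∃ M : ℝ, ∀ N : ℕ, ∑ n ∈ Finset.range N, 𝔼.cap (A n) < M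

lemma SLE.constE (𝔼 : SLE Ω) (c : ℝ) : 𝔼.E (constBM Ω c) = c :=
  𝔼.const_preserve c _

lemma SLE.add_constE (𝔼 : SLE Ω) (η : BM Ω) (c : ℝ) :
    𝔼.E (η + constBM Ω c) = 𝔼.E η + c := by
  apply le_antisymm
  · have := 𝔼.subadd η (constBM Ω c); rwa [𝔼.constE] at this
  · have h := 𝔼.subadd (η + constBM Ω c) (constBM Ω (-c))
    rw [𝔼.constE] at h
    have he : η + constBM Ω c + constBM Ω (-c) = η :=
      Subtype.ext (funext fun ω => by simp [constBM])
    rw [he] at h; linarith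

lemma SLE.zeroE (𝔼 : SLE Ω) : 𝔼.E 0 = 0 := by
  have : (0 : BM Ω) = constBM Ω 0 := Subtype.ext (funext fun ω => by simp [constBM])
  rw [this, 𝔼.constE]

/-- For `λ ∈ [-𝔼.E (-ξ), 𝔼.E ξ]`,
`𝔼.E ((ξ - λ)²) ≤ 𝔼.E ((ξ - 𝔼.E ξ)²) + (𝔼.E ξ + 𝔼.E (-ξ))²`. -/
theorem second_moment_bound (𝔼 : SLE Ω) (ξ : BM Ω) (lam : ℝ)
    (hlam : lam ∈ Set.Icc (-𝔼.E (-ξ)) (𝔼.E ξ)) :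
    𝔼.E (mulBM (ξ - constBM Ω lam) (ξ - constBM Ω lam)) ≤
      𝔼.E (mulBM (ξ - constBM Ω (𝔼.E ξ)) (ξ - constBM Ω (𝔼.E ξ))) +
        (𝔼.E ξ + 𝔼.E (-ξ)) ^ 2 := by
  set μ := 𝔼.E ξ with hμ
  set a := μ - lam with ha
  have ha0 : 0 ≤ a := by have := hlam.2; simp [ha]; linarith
  have haσ : a ≤ μ + 𝔼.E (-ξ) := by have := hlam.1; simp [ha]; linarith
  have hσ0 : 0 ≤ μ + 𝔼.E (-ξ) := by
    have h := 𝔼.subadd ξ (-ξ)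
    rw [add_neg_cancel, 𝔼.zeroE] at h; linarith
  -- decomposition
  have hdec : mulBM (ξ - constBM Ω lam) (ξ - constBM Ω lam)
      = mulBM (ξ - constBM Ω μ) (ξ - constBM Ω μ)
        + ((2 * a) • (ξ - constBM Ω μ) + constBM Ω (a ^ 2)) := by
    refine Subtype.ext (funext fun ω => ?_)
    show ((ξ : Ω → ℝ) ω - lam) * ((ξ : Ω → ℝ) ω - lam)
      = ((ξ : Ω → ℝ) ω - μ) * ((ξ : Ω → ℝ) ω - μ)
        + ((2 * a) * ((ξ : Ω → ℝ) ω - μ) + a ^ 2)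
    have : lam = μ - a := by rw [ha]; ring
    rw [this]; ring
  have hsub : ξ - constBM Ω μ = ξ + constBM Ω (-μ) :=
    Subtype.ext (funext fun ω => by simp [constBM]; ring)
  have hEcent : 𝔼.E (ξ - constBM Ω μ) = 0 := by
    rw [hsub, 𝔼.add_constE]; simp [hμ]
  have hrest : 𝔼.E ((2 * a) • (ξ - constBM Ω μ) + constBM Ω (a ^ 2)) = a ^ 2 := by
    rw [𝔼.add_constE, 𝔼.pos_homog (2 * a) (by linarith), hEcent]; ring
  calc 𝔼.E (mulBM (ξ - constBM Ω lam) (ξ - constBM Ω lam))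
      ≤ 𝔼.E (mulBM (ξ - constBM Ω μ) (ξ - constBM Ω μ))
        + 𝔼.E ((2 * a) • (ξ - constBM Ω μ) + constBM Ω (a ^ 2)) := by
        rw [hdec]; exact 𝔼.subadd _ _
    _ = 𝔼.E (mulBM (ξ - constBM Ω μ) (ξ - constBM Ω μ)) + a ^ 2 := by rw [hrest]
    _ ≤ 𝔼.E (mulBM (ξ - constBM Ω μ) (ξ - constBM Ω μ)) + (μ + 𝔼.E (-ξ)) ^ 2 := by
        have := pow_le_pow_left₀ ha0 haσ 2
        linarith
end

section
/- Let E be a regular sublinear expectation on the space X of bounded measurable real-valued functions on (Ω, F) satisfying assumption (H₀), with upper capacity C(A) := E(1_A), and let {ξ_n}_{n≥1} ⊂ X be an independent sequence with respect to E. Then the partial sums S_n := Σ_{i=1}^{n} ξ_i converge pointwise outside a C-polar set to some finite-valued random variable (C-quasi-surely) if and only if {S_n} converges in capacity. -/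
open MeasureTheory Set Filter Topology Classical

variable {Ω : Type*} [MeasurableSpace Ω]

section AuxBasics

variable {Ω : Type*} [MeasurableSpace Ω]

lemma coe_sum_apply {ι : Type*} (s : Finset ι) (f : ι → BM Ω) (ω : Ω) :
    ((∑ i ∈ s, f i : BM Ω) : Ω → ℝ) ω = ∑ i ∈ s, (f i : Ω → ℝ) ω := by
  rw [AddSubmonoidClass.coe_finset_sum]; exact Finset.sum_apply ω s _

variable (𝔼 : SLE Ω)

lemma E_zero : 𝔼.E 0 = 0 := by
  have h := 𝔼.pos_homog 0 le_rfl 0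
  simpa using h

lemma E_mono {f g : BM Ω} (h : ∀ ω, (f : Ω → ℝ) ω ≤ (g : Ω → ℝ) ω) : 𝔼.E f ≤ 𝔼.E g :=
  𝔼.mono g f h

lemma E_nonneg {f : BM Ω} (h : ∀ ω, 0 ≤ (f : Ω → ℝ) ω) : 0 ≤ 𝔼.E f := by
  rw [← E_zero 𝔼]
  exact E_mono 𝔼 h

lemma E_nonpos {f : BM Ω} (h : ∀ ω, (f : Ω → ℝ) ω ≤ 0) : 𝔼.E f ≤ 0 := by
  rw [← E_zero 𝔼]
  exact E_mono 𝔼 h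

lemma E_const (c : ℝ) : 𝔼.E (constBM Ω c) = c := 𝔼.const_preserve c _

lemma E_sum_le {ι : Type*} (s : Finset ι) (f : ι → BM Ω) :
    𝔼.E (∑ i ∈ s, f i) ≤ ∑ i ∈ s, 𝔼.E (f i) := by
  classical
  induction s using Finset.induction_on with
  | empty => simp [E_zero]
  | insert _ _ h ih =>
      rw [Finset.sum_insert h, Finset.sum_insert h]
      exact (𝔼.subadd _ _).trans (by linarith)

lemma indBM_apply (A : Set Ω) (hA : MeasurableSet A) (ω : Ω) :
    (indBM A hA : Ω → ℝ) ω = if ω ∈ A then 1 else 0 := by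
  simp [indBM, Set.indicator_apply]

lemma indBM_nonneg (A : Set Ω) (hA : MeasurableSet A) (ω : Ω) :
    0 ≤ (indBM A hA : Ω → ℝ) ω := by
  rw [indBM_apply]; split <;> norm_num

lemma indBM_le_one (A : Set Ω) (hA : MeasurableSet A) (ω : Ω) :
    (indBM A hA : Ω → ℝ) ω ≤ 1 := by
  rw [indBM_apply]; split <;> norm_num

lemma indBM_of_mem {A : Set Ω} {hA : MeasurableSet A} {ω : Ω} (h : ω ∈ A) :
    (indBM A hA : Ω → ℝ) ω = 1 := by rw [indBM_apply, if_pos h]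

lemma indBM_of_not_mem {A : Set Ω} {hA : MeasurableSet A} {ω : Ω} (h : ω ∉ A) :
    (indBM A hA : Ω → ℝ) ω = 0 := by rw [indBM_apply, if_neg h]

lemma cap_eq (A : Set Ω) (hA : MeasurableSet A) : 𝔼.cap A = 𝔼.E (indBM A hA) := dif_pos hA

lemma cap_nonneg (A : Set Ω) : 0 ≤ 𝔼.cap A := by
  unfold SLE.cap
  split
  · exact E_nonneg 𝔼 (indBM_nonneg _ _)
  · exact le_rfl

lemma cap_le_one (A : Set Ω) : 𝔼.cap A ≤ 1 := by
  unfold SLE.cap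
  split
  · calc 𝔼.E _ ≤ 𝔼.E (constBM Ω 1) := E_mono 𝔼 (indBM_le_one _ _)
      _ = 1 := E_const 𝔼 1
  · norm_num

lemma cap_empty : 𝔼.cap (∅ : Set Ω) = 0 := by
  rw [cap_eq 𝔼 ∅ MeasurableSet.empty]
  have : ∀ ω : Ω, (indBM (∅ : Set Ω) MeasurableSet.empty : Ω → ℝ) ω ≤ 0 := by
    intro ω; rw [indBM_of_not_mem (Set.notMem_empty ω)]
  exact le_antisymm (E_nonpos 𝔼 this) (E_nonneg 𝔼 (indBM_nonneg _ _))

lemma cap_mono {A B : Set Ω} (hA : MeasurableSet A) (hB : MeasurableSet B) (h : A ⊆ B) :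
    𝔼.cap A ≤ 𝔼.cap B := by
  rw [cap_eq 𝔼 A hA, cap_eq 𝔼 B hB]
  refine E_mono 𝔼 fun ω => ?_
  rw [indBM_apply, indBM_apply]
  by_cases hω : ω ∈ A
  · rw [if_pos hω, if_pos (h hω)]
  · rw [if_neg hω]; split <;> norm_num

lemma cap_le_sum {ι : Type*} {A : Set Ω} (hA : MeasurableSet A) (s : Finset ι) (B : ι → Set Ω)
    (hB : ∀ i, MeasurableSet (B i)) (hcov : ∀ ω ∈ A, ∃ i ∈ s, ω ∈ B i) :
    𝔼.cap A ≤ ∑ i ∈ s, 𝔼.cap (B i) := by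
  have h1 : 𝔼.cap A ≤ 𝔼.E (∑ i ∈ s, indBM (B i) (hB i)) := by
    rw [cap_eq 𝔼 A hA]
    refine E_mono 𝔼 fun ω => ?_
    rw [coe_sum_apply]
    by_cases hω : ω ∈ A
    · obtain ⟨i, his, hi⟩ := hcov ω hω
      calc (indBM A hA : Ω → ℝ) ω ≤ 1 := indBM_le_one _ _ _
        _ = (indBM (B i) (hB i) : Ω → ℝ) ω := (indBM_of_mem hi).symm
        _ ≤ _ := Finset.single_le_sum (fun j _ => indBM_nonneg (B j) (hB j) ω) his
    · rw [indBM_of_not_mem hω]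
      exact Finset.sum_nonneg fun j _ => indBM_nonneg (B j) (hB j) ω
  refine h1.trans ((E_sum_le 𝔼 s _).trans ?_)
  refine le_of_eq (Finset.sum_congr rfl fun i _ => ?_)
  rw [cap_eq 𝔼 (B i) (hB i)]

lemma cap_union_le {A B : Set Ω} (hA : MeasurableSet A) (hB : MeasurableSet B) :
    𝔼.cap (A ∪ B) ≤ 𝔼.cap A + 𝔼.cap B := by
  classical
  have := cap_le_sum 𝔼 (hA.union hB) ({0, 1} : Finset ℕ) (fun i => if i = 0 then A else B)
    (by intro i; split <;> assumption)
    (by rintro ω (h | h)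
        · exact ⟨0, by norm_num, by simpa using h⟩
        · exact ⟨1, by norm_num, by simpa using h⟩)
  simpa using this

end AuxBasics

section AuxL

variable {Ω : Type*} [MeasurableSpace Ω] {𝔼 : SLE Ω} {L : BM Ω →ₗ[ℝ] ℝ}

lemma coe_sub_apply (f g : BM Ω) (ω : Ω) :
    ((f - g : BM Ω) : Ω → ℝ) ω = (f : Ω → ℝ) ω - (g : Ω → ℝ) ω := rfl

lemma L_mono (hL : Dominated 𝔼 L) {f g : BM Ω}
    (h : ∀ ω, (f : Ω → ℝ) ω ≤ (g : Ω → ℝ) ω) : L f ≤ L g := by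
  have h1 : L (f - g) ≤ 𝔼.E (f - g) := hL _
  have h2 : 𝔼.E (f - g) ≤ 0 := E_nonpos 𝔼 fun ω => by
    rw [coe_sub_apply]; linarith [h ω]
  have h3 := map_sub L f g
  linarith [h1.trans h2]

lemma L_const (hL : Dominated 𝔼 L) (c : ℝ) : L (constBM Ω c) = c := by
  have h1 : L (constBM Ω c) ≤ c := by
    have := hL (constBM Ω c); rwa [E_const] at this
  have h3 : constBM Ω (-c) = -constBM Ω c := rfl
  have h2 : L (constBM Ω (-c)) ≤ -c := by
    have := hL (constBM Ω (-c)); rwa [E_const] at this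
  rw [h3, map_neg] at h2
  linarith

lemma L_nonneg (hL : Dominated 𝔼 L) {f : BM Ω} (h : ∀ ω, 0 ≤ (f : Ω → ℝ) ω) : 0 ≤ L f := by
  have := L_mono hL (f := 0) (g := f) fun ω => h ω
  rwa [map_zero] at this

lemma L_ind_le_cap (hL : Dominated 𝔼 L) (A : Set Ω) (hA : MeasurableSet A) :
    L (indBM A hA) ≤ 𝔼.cap A := by
  rw [cap_eq 𝔼 A hA]; exact hL _

lemma L_ind_nonneg (hL : Dominated 𝔼 L) (A : Set Ω) (hA : MeasurableSet A) :
    0 ≤ L (indBM A hA) := L_nonneg hL (indBM_nonneg A hA)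

/-- Regularity transfers to any dominated linear functional. -/
lemma L_tendsto_zero (hreg : 𝔼.Regular) (hL : Dominated 𝔼 L) (ζ : ℕ → BM Ω)
    (hanti : ∀ ω, Antitone fun n => (ζ n : Ω → ℝ) ω)
    (hto : ∀ ω, Tendsto (fun n => (ζ n : Ω → ℝ) ω) atTop (𝓝 0)) :
    Tendsto (fun n => L (ζ n)) atTop (𝓝 0) := by
  have h1 := hreg ζ hanti hto
  have hnn : ∀ n, 0 ≤ L (ζ n) := by
    intro n
    refine L_nonneg hL fun ω => ?_
    exact le_of_tendsto (hto ω) (Filter.eventually_atTop.2 ⟨n, fun m hm => hanti ω hm⟩)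
  exact squeeze_zero hnn (fun n => hL (ζ n)) h1

/-- Continuity from above for a dominated linear functional: if `V n ↓ W` then
`L(1_{V n}) → L(1_W)`. -/
lemma L_cont_above (hreg : 𝔼.Regular) (hL : Dominated 𝔼 L) (V : ℕ → Set Ω)
    (hV : ∀ n, MeasurableSet (V n)) (hanti : ∀ n, V (n + 1) ⊆ V n)
    {W : Set Ω} (hW : MeasurableSet W) (hWV : W = ⋂ n, V n) :
    Tendsto (fun n => L (indBM (V n) (hV n))) atTop (𝓝 (L (indBM W hW))) := by
  have hVanti : Antitone V := antitone_nat_of_succ_le hanti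
  have hWsub : ∀ n, W ⊆ V n := fun n => hWV ▸ Set.iInter_subset V n
  set ζ : ℕ → BM Ω := fun n => indBM (V n) (hV n) - indBM W hW with hζ
  have hζanti : ∀ ω, Antitone fun n => (ζ n : Ω → ℝ) ω := by
    intro ω m n hmn
    simp only [hζ, coe_sub_apply]
    have : (indBM (V n) (hV n) : Ω → ℝ) ω ≤ (indBM (V m) (hV m) : Ω → ℝ) ω := by
      rw [indBM_apply, indBM_apply]
      by_cases hω : ω ∈ V n
      · rw [if_pos hω, if_pos (hVanti hmn hω)]
      · rw [if_neg hω]; split <;> norm_num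
    linarith
  have hζto : ∀ ω, Tendsto (fun n => (ζ n : Ω → ℝ) ω) atTop (𝓝 0) := by
    intro ω
    by_cases hω : ω ∈ W
    · have : ∀ n, (ζ n : Ω → ℝ) ω = 0 := by
        intro n
        simp only [hζ, coe_sub_apply, indBM_of_mem hω, indBM_of_mem (hWsub n hω)]
        ring
      simpa [this] using tendsto_const_nhds (x := (0:ℝ))
    · obtain ⟨n₀, hn₀⟩ : ∃ n₀, ω ∉ V n₀ := by
        by_contra hc
        push_neg at hc
        exact hω (hWV ▸ Set.mem_iInter.2 hc)
      refine tendsto_atTop_of_eventually_const (i₀ := n₀) fun n hn => ?_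
      simp only [hζ, coe_sub_apply, indBM_of_not_mem hω,
        indBM_of_not_mem (fun h => hn₀ (hVanti hn h)), sub_zero]
  have h0 := L_tendsto_zero hreg hL ζ hζanti hζto
  have heq : ∀ n, L (indBM (V n) (hV n)) = L (ζ n) + L (indBM W hW) := by
    intro n; simp [hζ, map_sub]
  simp only [heq]
  simpa using h0.add_const (L (indBM W hW))

/-- Hahn–Banach: there is a dominated linear functional attaining `𝔼.E` at any given point. -/
lemma exists_dominated_eq (𝔼 : SLE Ω) (f : BM Ω) :
    ∃ L : BM Ω →ₗ[ℝ] ℝ, Dominated 𝔼 L ∧ L f = 𝔼.E f := by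
  have key : ∀ x : BM Ω, x ≠ 0 → ∃ L : BM Ω →ₗ[ℝ] ℝ, Dominated 𝔼 L ∧ L x = 𝔼.E x := by
    intro x hx
    set pm := LinearPMap.mkSpanSingleton (K := ℝ) (σ := RingHom.id ℝ) x (𝔼.E x) hx with hpm
    have hbound : ∀ c : ℝ, c * 𝔼.E x ≤ 𝔼.E (c • x) := by
      intro c
      rcases le_or_gt 0 c with hc | hc
      · rw [𝔼.pos_homog c hc x]
      · have h1 : 𝔼.E (c • x) + 𝔼.E ((-c) • x) ≥ 0 := by
          have := 𝔼.subadd (c • x) ((-c) • x)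
          have h2 : c • x + (-c) • x = 0 := by module
          rw [h2, E_zero] at this
          linarith
        have h3 : 𝔼.E ((-c) • x) = -c * 𝔼.E x := 𝔼.pos_homog (-c) (by linarith) x
        nlinarith
    have hdom : ∀ y : pm.domain, pm y ≤ 𝔼.E y := by
      rintro ⟨y, hy⟩
      rw [LinearPMap.domain_mkSpanSingleton] at hy
      obtain ⟨c, rfl⟩ := Submodule.mem_span_singleton.1 hy
      have : pm ⟨c • x, hy⟩ = c • 𝔼.E x := LinearPMap.mkSpanSingleton'_apply x (𝔼.E x) _ c hy
      rw [this]
      simpa using hbound c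
    obtain ⟨g, hg_eq, hg_le⟩ := exists_extension_of_le_sublinear pm 𝔼.E
      (fun c hc y => 𝔼.pos_homog c hc.le y) 𝔼.subadd hdom
    refine ⟨g, hg_le, ?_⟩
    have hmem : x ∈ pm.domain := by
      rw [LinearPMap.domain_mkSpanSingleton]
      exact Submodule.mem_span_singleton_self x
    have := hg_eq ⟨x, hmem⟩
    rw [this, LinearPMap.mkSpanSingleton_apply]
  by_cases hf : f = 0
  · by_cases h1 : (constBM Ω 1 : BM Ω) = 0
    · -- Ω is "measure-theoretically empty": every element of BM Ω is 0
      have hall : ∀ g : BM Ω, g = 0 := by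
        intro g
        ext ω
        have := congrArg (fun h : BM Ω => (h : Ω → ℝ) ω) h1
        simp only [constBM] at this
        norm_num at this
      refine ⟨0, fun ξ => ?_, by rw [hf, map_zero, E_zero]⟩
      rw [hall ξ]
      simp [E_zero]
    · obtain ⟨L, hL, -⟩ := key _ h1
      exact ⟨L, hL, by simp [hf, E_zero]⟩
  · exact key f hf

end AuxL

section AuxH0

variable {Ω : Type*} [MeasurableSpace Ω]

/-- There is a finite disjoint measurable family inside `R` with capacity sum at least `t`. -/
def FamGE (𝔼 : SLE Ω) (R : Set Ω) (t : ℝ) : Prop :=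
  ∃ (n : ℕ) (A : ℕ → Set Ω), (∀ i, i < n → MeasurableSet (A i)) ∧ (∀ i, i < n → A i ⊆ R) ∧
    (∀ i, i < n → ∀ j, j < n → i ≠ j → Disjoint (A i) (A j)) ∧
    t ≤ ∑ i ∈ Finset.range n, 𝔼.cap (A i)

/-- `R` supports finite disjoint families of arbitrarily large capacity sum. -/
def UnbSLE (𝔼 : SLE Ω) (R : Set Ω) : Prop := ∀ t, FamGE 𝔼 R t

lemma not_unb_of_pieces (𝔼 : SLE Ω) {R : Set Ω} (n : ℕ) (Epart : ℕ → Set Ω)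
    (hE : ∀ i, i < n → MeasurableSet (Epart i)) (Rest : Set Ω) (hRest : MeasurableSet Rest)
    (hcov : R ⊆ (⋃ i ∈ Finset.range n, Epart i) ∪ Rest)
    (hEnb : ∀ i, i < n → ¬ UnbSLE 𝔼 (Epart i)) (hRnb : ¬ UnbSLE 𝔼 Rest) :
    ¬ UnbSLE 𝔼 R := by
  classical
  have htE : ∀ i, ∃ t, i < n → ¬ FamGE 𝔼 (Epart i) t := by
    intro i
    by_cases hi : i < n
    · obtain ⟨t, ht⟩ := not_forall.1 (hEnb i hi)
      exact ⟨t, fun _ => ht⟩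
    · exact ⟨0, fun h => absurd h hi⟩
  choose tE htE using htE
  obtain ⟨tR, htR⟩ := not_forall.1 hRnb
  set T : ℝ := ∑ i ∈ Finset.range n, max (tE i) 0 + max tR 0 with hT
  intro hU
  obtain ⟨p, B, hmB, hsubB, hdisjB, hsumB⟩ := hU T
  -- bound each cap (B j) by the traces
  have hBle : ∀ j, j < p → 𝔼.cap (B j) ≤
      ∑ i ∈ Finset.range n, 𝔼.cap (B j ∩ Epart i) + 𝔼.cap (B j ∩ Rest) := by
    intro j hj
    have := cap_le_sum 𝔼 (hmB j hj) (Finset.range (n + 1))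
      (fun i => if i < n then B j ∩ Epart i else B j ∩ Rest)
      (by intro i; split_ifs with h
          · exact (hmB j hj).inter (hE i h)
          · exact (hmB j hj).inter hRest)
      (by intro ω hω
          rcases hcov (hsubB j hj hω) with h | h
          · simp only [Set.mem_iUnion, Finset.mem_range] at h
            obtain ⟨i, hi, hωi⟩ := h
            exact ⟨i, Finset.mem_range.2 (by omega), by simp [hi, Set.mem_inter hω hωi]⟩
          · exact ⟨n, Finset.mem_range.2 (by omega), by simp [Set.mem_inter hω h]⟩)
    rw [Finset.sum_range_succ] at this
    beta_reduce at this
    have hlast : (if n < n then B j ∩ Epart n else B j ∩ Rest) = B j ∩ Rest :=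
      if_neg (lt_irrefl n)
    rw [hlast] at this
    refine this.trans (le_of_eq ?_)
    have hcg : ∀ i ∈ Finset.range n,
        𝔼.cap (if i < n then B j ∩ Epart i else B j ∩ Rest) = 𝔼.cap (B j ∩ Epart i) :=
      fun i hi => by rw [if_pos (Finset.mem_range.1 hi)]
    rw [Finset.sum_congr rfl hcg]
  -- the traces on each piece form disjoint families
  have htrace : ∀ i, i < n → ∑ j ∈ Finset.range p, 𝔼.cap (B j ∩ Epart i) < max (tE i) 0 := by
    intro i hi
    have hnot := htE i hi
    by_contra hge
    push_neg at hge
    exact hnot ⟨p, fun j => B j ∩ Epart i,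
      fun j hj => (hmB j hj).inter (hE i hi),
      fun j _ => Set.inter_subset_right,
      fun j hj k hk hjk => (hdisjB j hj k hk hjk).mono Set.inter_subset_left
        Set.inter_subset_left,
      (le_max_left _ _).trans hge⟩
  have htraceR : ∑ j ∈ Finset.range p, 𝔼.cap (B j ∩ Rest) < max tR 0 := by
    by_contra hge
    push_neg at hge
    exact htR ⟨p, fun j => B j ∩ Rest,
      fun j hj => (hmB j hj).inter hRest,
      fun j _ => Set.inter_subset_right,
      fun j hj k hk hjk => (hdisjB j hj k hk hjk).mono Set.inter_subset_left
        Set.inter_subset_left,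
      (le_max_left _ _).trans hge⟩
  have hsum2 : ∑ j ∈ Finset.range p, 𝔼.cap (B j) <
      ∑ i ∈ Finset.range n, max (tE i) 0 + max tR 0 := by
    calc ∑ j ∈ Finset.range p, 𝔼.cap (B j)
        ≤ ∑ j ∈ Finset.range p,
            (∑ i ∈ Finset.range n, 𝔼.cap (B j ∩ Epart i) + 𝔼.cap (B j ∩ Rest)) :=
          Finset.sum_le_sum fun j hj => hBle j (Finset.mem_range.1 hj)
      _ = ∑ i ∈ Finset.range n, (∑ j ∈ Finset.range p, 𝔼.cap (B j ∩ Epart i)) +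
            ∑ j ∈ Finset.range p, 𝔼.cap (B j ∩ Rest) := by
          rw [Finset.sum_add_distrib, Finset.sum_comm]
      _ < ∑ i ∈ Finset.range n, max (tE i) 0 + max tR 0 := by
          rcases Nat.eq_zero_or_pos n with hn | hn
          · subst hn; simpa using htraceR
          · refine add_lt_add_of_le_of_lt (Finset.sum_le_sum fun i hi =>
              (htrace i (Finset.mem_range.1 hi)).le) htraceR
  rw [← hT] at hsum2
  linarith [hsumB]

lemma key_step (𝔼 : SLE Ω) {R : Set Ω} (hR : MeasurableSet R) (hU : UnbSLE 𝔼 R) :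
    ∃ (n : ℕ) (A : ℕ → Set Ω) (R' : Set Ω),
      (∀ i, i < n → MeasurableSet (A i)) ∧ (∀ i, i < n → A i ⊆ R) ∧
      (∀ i, i < n → ∀ j, j < n → i ≠ j → Disjoint (A i) (A j)) ∧
      MeasurableSet R' ∧ R' ⊆ R ∧ (∀ i, i < n → Disjoint (A i) R') ∧
      1 ≤ ∑ i ∈ Finset.range n, 𝔼.cap (A i) ∧ UnbSLE 𝔼 R' := by
  classical
  obtain ⟨n, A, hmA, hsub, hdisj, hsum⟩ := hU 2
  have hmA' : ∀ i, i < n → MeasurableSet (A i) := hmA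
  set Rest : Set Ω := R \ ⋃ i ∈ Finset.range n, A i with hRest
  have hmRest : MeasurableSet Rest :=
    hR.diff (Finset.measurableSet_biUnion _ fun i hi => hmA i (Finset.mem_range.1 hi))
  by_cases h1 : UnbSLE 𝔼 Rest
  · refine ⟨n, A, Rest, hmA, hsub, hdisj, hmRest, Set.diff_subset, ?_, by linarith, h1⟩
    intro i hi
    refine Set.disjoint_left.2 fun ω hω hωR => ?_
    exact hωR.2 (Set.mem_biUnion (Finset.mem_range.2 hi) hω)
  · -- some piece is unbounded
    have h2 : ∃ i, i < n ∧ UnbSLE 𝔼 (A i) := by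
      by_contra hc
      push_neg at hc
      exact (not_unb_of_pieces 𝔼 n A hmA Rest hmRest
        (fun ω hω => by
          by_cases hω2 : ω ∈ ⋃ i ∈ Finset.range n, A i
          · exact Or.inl hω2
          · exact Or.inr ⟨hω, hω2⟩)
        (fun i hi hcc => hc i hi hcc) h1) hU
    obtain ⟨i₀, hi₀, hUi₀⟩ := h2
    refine ⟨n, fun j => if j = i₀ then ∅ else A j, A i₀,
      ?_, ?_, ?_, hmA i₀ hi₀, hsub i₀ hi₀, ?_, ?_, hUi₀⟩
    · intro j hj; dsimp only; split
      · exact MeasurableSet.empty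
      · exact hmA j hj
    · intro j hj; dsimp only; split
      · exact Set.empty_subset _
      · exact hsub j hj
    · intro j hj k hk hjk; dsimp only
      split_ifs with h h' h''
      · simp
      · simp
      · simp
      · exact hdisj j hj k hk hjk
    · intro j hj; dsimp only; split_ifs with h
      · simp
      · exact hdisj j hj i₀ hi₀ h
    · beta_reduce
      have hsplit : ∑ j ∈ Finset.range n, 𝔼.cap (if j = i₀ then (∅ : Set Ω) else A j) =
          (∑ j ∈ Finset.range n, 𝔼.cap (A j)) - 𝔼.cap (A i₀) := by
        rw [← Finset.sum_erase_add _ _ (Finset.mem_range.2 hi₀)]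
        rw [if_pos rfl, cap_empty, add_zero]
        rw [show (∑ j ∈ Finset.range n, 𝔼.cap (A j)) =
            ∑ j ∈ (Finset.range n).erase i₀, 𝔼.cap (A j) + 𝔼.cap (A i₀) from
          (Finset.sum_erase_add _ _ (Finset.mem_range.2 hi₀)).symm]
        rw [Finset.sum_congr rfl (fun j hj =>
          (by rw [if_neg (Finset.ne_of_mem_erase hj)] :
            𝔼.cap (if j = i₀ then (∅ : Set Ω) else A j) = 𝔼.cap (A j)))]
        ring
      rw [hsplit]
      have := cap_le_one 𝔼 (A i₀)
      linarith

/-- Under (H₀), capacity sums over finite disjoint measurable families are uniformly bounded. -/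
lemma uniform_disjoint_bound (𝔼 : SLE Ω) (hH0 : H0 𝔼) :
    ∃ K : ℝ, ∀ (n : ℕ) (A : ℕ → Set Ω), (∀ i, i < n → MeasurableSet (A i)) →
      (∀ i, i < n → ∀ j, j < n → i ≠ j → Disjoint (A i) (A j)) →
      ∑ i ∈ Finset.range n, 𝔼.cap (A i) ≤ K := by
  classical
  by_contra hcon
  push_neg at hcon
  have hUuniv : UnbSLE 𝔼 (Set.univ : Set Ω) := by
    intro t
    obtain ⟨n, A, hmA, hdisj, hsum⟩ := hcon t
    exact ⟨n, A, hmA, fun i _ => Set.subset_univ _, hdisj, hsum.le⟩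
  -- iterate the key step
  have step := fun (R : Set Ω) (hR : MeasurableSet R) (hU : UnbSLE 𝔼 R) => key_step 𝔼 hR hU
  choose! nf Af Rf hmAf hsubAf hdisjAf hmRf hsubRf hdisjRf hsumf hUf using step
  -- the decreasing sequence of "unbounded" sets
  set Rs : ℕ → Set Ω := fun k => Nat.rec (Set.univ : Set Ω) (fun _ R => Rf R) k with hRs
  have hRs0 : Rs 0 = Set.univ := rfl
  have hRsS : ∀ k, Rs (k + 1) = Rf (Rs k) := fun k => rfl
  have hInv : ∀ k, MeasurableSet (Rs k) ∧ UnbSLE 𝔼 (Rs k) := by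
    intro k
    induction k with
    | zero => exact ⟨MeasurableSet.univ, hUuniv⟩
    | succ k ih =>
        rw [hRsS]
        exact ⟨hmRf _ ih.1 ih.2, hUf _ ih.1 ih.2⟩
  set F : ℕ → ℕ → Set Ω := fun k i => if i < nf (Rs k) then Af (Rs k) i else ∅ with hF
  have hmF : ∀ k i, MeasurableSet (F k i) := by
    intro k i
    simp only [hF]
    split_ifs with h
    · exact hmAf _ (hInv k).1 (hInv k).2 i h
    · exact MeasurableSet.empty
  have hFsub : ∀ k i, F k i ⊆ Rs k := by
    intro k i
    simp only [hF]; split_ifs with h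
    · exact hsubAf _ (hInv k).1 (hInv k).2 i h
    · exact Set.empty_subset _
  have hFdisjR : ∀ k i, Disjoint (F k i) (Rs (k + 1)) := by
    intro k i
    simp only [hF]; split_ifs with h
    · rw [hRsS]; exact hdisjRf _ (hInv k).1 (hInv k).2 i h
    · exact disjoint_bot_left
  have hRmono : ∀ k l, k ≤ l → Rs l ⊆ Rs k := by
    intro k l hkl
    induction l with
    | zero => rw [Nat.le_zero.1 hkl]
    | succ l ih =>
        rcases Nat.lt_or_ge k (l + 1) with h | h
        · have := ih (by omega)
          refine Set.Subset.trans ?_ this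
          rw [hRsS]
          exact hsubRf _ (hInv l).1 (hInv l).2
        · have : k = l + 1 := by omega
          rw [this]
  -- disjointness across distinct (k, i) pairs
  have haux : ∀ k i l j, k < l → Disjoint (F k i) (F l j) := by
    intro k i l j hkl
    have h1 : F l j ⊆ Rs (k + 1) := (hFsub l j).trans (hRmono (k + 1) l hkl)
    exact (hFdisjR k i).mono_right h1
  have hFval : ∀ k i, i < nf (Rs k) → F k i = Af (Rs k) i := fun k i h => by
    simp only [hF]; rw [if_pos h]
  have hFval' : ∀ k i, ¬ i < nf (Rs k) → F k i = ∅ := fun k i h => by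
    simp only [hF]; rw [if_neg h]
  have hFdisjSame : ∀ k i j, i ≠ j → Disjoint (F k i) (F k j) := by
    intro k i j hij
    by_cases h : i < nf (Rs k)
    · by_cases h' : j < nf (Rs k)
      · rw [hFval k i h, hFval k j h']
        exact hdisjAf _ (hInv k).1 (hInv k).2 i h j h' hij
      · rw [hFval' k j h']
        exact disjoint_bot_right
    · rw [hFval' k i h]
      exact disjoint_bot_left
  have hFdisj : ∀ k i l j, (k, i) ≠ (l, j) → Disjoint (F k i) (F l j) := by
    intro k i l j hne
    rcases lt_trichotomy k l with h | h | h
    · exact haux k i l j h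
    · subst h
      refine hFdisjSame k i j fun hij => hne (by rw [hij])
    · exact (haux l j k i h).symm
  have hsumF : ∀ k, 1 ≤ ∑ i ∈ Finset.range (nf (Rs k)), 𝔼.cap (F k i) := by
    intro k
    have h1 := hsumf _ (hInv k).1 (hInv k).2
    refine h1.trans (le_of_eq (Finset.sum_congr rfl fun i hi => ?_))
    simp only [hF, if_pos (Finset.mem_range.1 hi)]
  -- flatten into a single disjoint cover of Ω
  set U : Set Ω := ⋃ k, ⋃ i, F k i with hUdef
  have hFU : ∀ k i, F k i ⊆ U := fun k i =>
    (Set.subset_iUnion (fun i' => F k i') i).trans (Set.subset_iUnion (fun k' => ⋃ i', F k' i') k)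
  set g : ℕ → Set Ω := fun m =>
    if m = 0 then Uᶜ else F (Nat.unpair (m - 1)).1 (Nat.unpair (m - 1)).2 with hg
  have hmU : MeasurableSet U := MeasurableSet.iUnion fun k => MeasurableSet.iUnion fun i => hmF k i
  have hmg : ∀ m, MeasurableSet (g m) := by
    intro m
    simp only [hg]
    split
    · exact hmU.compl
    · exact hmF _ _
  have hg0 : g 0 = Uᶜ := by simp [hg]
  have hgS : ∀ m, g (m + 1) = F (Nat.unpair m).1 (Nat.unpair m).2 := by
    intro m; simp [hg]
  have hgpair : ∀ k i, g (Nat.pair k i + 1) = F k i := by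
    intro k i
    rw [hgS, Nat.unpair_pair]
  have hdisjg : Pairwise (Function.onFun Disjoint g) := by
    intro a b hab
    unfold Function.onFun
    match a, b with
    | 0, 0 => exact absurd rfl hab
    | 0, (m+1) =>
        rw [hg0, hgS]
        exact disjoint_compl_left.mono_right (hFU _ _)
    | (m+1), 0 =>
        rw [hg0, hgS]
        exact (disjoint_compl_left.mono_right (hFU _ _)).symm
    | (m+1), (m'+1) =>
        rw [hgS, hgS]
        refine hFdisj _ _ _ _ fun hpair => ?_
        injection hpair with h4 h5
        have h3 : m = m' := by
          rw [← Nat.pair_unpair m, ← Nat.pair_unpair m', h4, h5]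
        exact hab (by rw [h3])
  have hguniv : (⋃ m, g m) = Set.univ := by
    ext ω
    simp only [Set.mem_iUnion, Set.mem_univ, iff_true]
    by_cases hω : ω ∈ U
    · rw [hUdef] at hω
      simp only [Set.mem_iUnion] at hω
      obtain ⟨k, i, hki⟩ := hω
      exact ⟨Nat.pair k i + 1, by rw [hgpair]; exact hki⟩
    · exact ⟨0, by rw [hg0]; exact hω⟩
  obtain ⟨M, hM⟩ := hH0 g hmg hdisjg hguniv
  -- derive the contradiction
  set j : ℕ := ⌈M⌉₊ + 1 with hj
  set T : Finset ℕ := (Finset.range j).biUnion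
    (fun k => (Finset.range (nf (Rs k))).image (fun i => Nat.pair k i + 1)) with hT
  set N : ℕ := T.sup id + 1 with hN
  have hTN : T ⊆ Finset.range N := by
    intro m hm
    rw [Finset.mem_range, hN]
    have h := Finset.le_sup (f := id) hm
    have h2 : m ≤ T.sup id := h
    omega
  have h1 : ∑ m ∈ T, 𝔼.cap (g m) ≤ ∑ m ∈ Finset.range N, 𝔼.cap (g m) :=
    Finset.sum_le_sum_of_subset_of_nonneg hTN fun m _ _ => cap_nonneg 𝔼 (g m)
  have h2 : ∑ m ∈ T, 𝔼.cap (g m) =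
      ∑ k ∈ Finset.range j, ∑ i ∈ Finset.range (nf (Rs k)), 𝔼.cap (F k i) := by
    rw [hT]
    rw [Finset.sum_biUnion]
    · refine Finset.sum_congr rfl fun k _ => ?_
      rw [Finset.sum_image]
      · exact Finset.sum_congr rfl fun i _ => by rw [hgpair]
      · intro i _ i' _ hii'
        have := Nat.pair_eq_pair.1 (by beta_reduce at hii'; omega : Nat.pair k i = Nat.pair k i')
        exact this.2
    · intro k₁ h₁ k₂ h₂ hk12
      simp only [Function.onFun]
      refine Finset.disjoint_left.2 fun m hm₁ hm₂ => ?_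
      simp only [Finset.mem_image, Finset.mem_range] at hm₁ hm₂
      obtain ⟨i₁, _, hi₁⟩ := hm₁
      obtain ⟨i₂, _, hi₂⟩ := hm₂
      have : Nat.pair k₁ i₁ = Nat.pair k₂ i₂ := by omega
      exact hk12 (Nat.pair_eq_pair.1 this).1
  have h3 : (j : ℝ) ≤ ∑ m ∈ T, 𝔼.cap (g m) := by
    rw [h2]
    calc (j : ℝ) = ∑ _k ∈ Finset.range j, (1 : ℝ) := by simp
    _ ≤ _ := Finset.sum_le_sum fun k _ => hsumF k
  have h4 : (j : ℝ) > M := by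
    rw [hj]
    push_cast
    have := Nat.le_ceil M
    linarith
  have h5 := hM N
  linarith

end AuxH0

section AuxMeas

variable {Ω : Type*} [MeasurableSpace Ω]

lemma indBM_congr {A B : Set Ω} (h : A = B) (hA : MeasurableSet A) (hB : MeasurableSet B) :
    indBM A hA = indBM B hB := by subst h; rfl

lemma measurableSet_abslt_m {Ω' : Type*} {m : MeasurableSpace Ω'} (c : ℝ) {f : Ω' → ℝ}
    (hf : Measurable[m] f) : MeasurableSet[m] {ω | c < |f ω|} := by
  letI := m
  exact measurableSet_lt measurable_const hf.abs

lemma measurableSet_absle_m {Ω' : Type*} {m : MeasurableSpace Ω'} (c : ℝ) {f : Ω' → ℝ}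
    (hf : Measurable[m] f) : MeasurableSet[m] {ω | |f ω| ≤ c} := by
  letI := m
  exact measurableSet_le hf.abs measurable_const

lemma sigmaGen_le (ξ : ℕ → BM Ω) (a b : ℕ) : sigmaGen ξ a b ≤ ‹MeasurableSpace Ω› := by
  refine iSup₂_le fun i _ => ?_
  exact measurable_iff_comap_le.1 (BM.measurable (ξ i))

lemma measurable_xi_sigmaGen (ξ : ℕ → BM Ω) {a b i : ℕ} (hi : i ∈ Set.Icc a b) :
    Measurable[sigmaGen ξ a b] (ξ i : Ω → ℝ) := by
  rw [measurable_iff_comap_le]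
  exact le_iSup₂ (f := fun i (_ : i ∈ Set.Icc a b) =>
    MeasurableSpace.comap (fun ω => (ξ i : Ω → ℝ) ω) inferInstance) i hi

lemma measurable_sum_sigmaGen (ξ : ℕ → BM Ω) (a b : ℕ) (s : Finset ℕ)
    (hs : ∀ i ∈ s, i ∈ Set.Icc a b) :
    Measurable[sigmaGen ξ a b] (fun ω => ∑ i ∈ s, (ξ i : Ω → ℝ) ω) :=
  Finset.measurable_sum s fun i hi => measurable_xi_sigmaGen ξ (hs i hi)

lemma indBM_add_compl (A : Set Ω) (hA : MeasurableSet A) :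
    indBM A hA + indBM Aᶜ hA.compl = constBM Ω 1 := by
  apply Subtype.ext
  funext ω
  show (indBM A hA : Ω → ℝ) ω + (indBM Aᶜ hA.compl : Ω → ℝ) ω = 1
  by_cases h : ω ∈ A
  · rw [indBM_of_mem h, indBM_of_not_mem (by simpa using h)]
    norm_num
  · rw [indBM_of_not_mem h, indBM_of_mem (by simpa using h)]
    norm_num

variable {𝔼 : SLE Ω} {L : BM Ω →ₗ[ℝ] ℝ}

lemma L_compl (hL : Dominated 𝔼 L) (A : Set Ω) (hA : MeasurableSet A) :
    L (indBM A hA) = 1 - L (indBM Aᶜ hA.compl) := by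
  have h := congrArg L (indBM_add_compl A hA)
  rw [map_add, L_const hL] at h
  linarith

lemma L_ind_mono (hL : Dominated 𝔼 L) {A B : Set Ω} (hA : MeasurableSet A)
    (hB : MeasurableSet B) (h : A ⊆ B) : L (indBM A hA) ≤ L (indBM B hB) := by
  refine L_mono hL fun ω => ?_
  rw [indBM_apply, indBM_apply]
  by_cases hω : ω ∈ A
  · rw [if_pos hω, if_pos (h hω)]
  · rw [if_neg hω]; split <;> norm_num

lemma L_cont_below (hreg : 𝔼.Regular) (hL : Dominated 𝔼 L) (V : ℕ → Set Ω)
    (hV : ∀ n, MeasurableSet (V n)) (hmono : ∀ n, V n ⊆ V (n + 1))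
    {W : Set Ω} (hW : MeasurableSet W) (hWV : W = ⋃ n, V n) :
    Tendsto (fun n => L (indBM (V n) (hV n))) atTop (𝓝 (L (indBM W hW))) := by
  have h1 : Tendsto (fun n => L (indBM (V n)ᶜ ((hV n).compl))) atTop
      (𝓝 (L (indBM Wᶜ hW.compl))) := by
    refine L_cont_above hreg hL (fun n => (V n)ᶜ) (fun n => (hV n).compl)
      (fun n => Set.compl_subset_compl.2 (hmono n)) hW.compl ?_
    rw [hWV, Set.compl_iUnion]
  have h2 : ∀ n, L (indBM (V n) (hV n)) = 1 - L (indBM (V n)ᶜ ((hV n).compl)) :=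
    fun n => L_compl hL (V n) (hV n)
  have h3 : L (indBM W hW) = 1 - L (indBM Wᶜ hW.compl) := L_compl hL W hW
  simp only [h2, h3]
  exact h1.const_sub 1

end AuxMeas

/-- Under regularity and (H₀), for an independent sequence the partial sums
converge C-quasi-surely to a finite-valued random variable iff they converge in capacity. -/
theorem qs_convergence_iff_capacity_convergence (𝔼 : SLE Ω) (hreg : 𝔼.Regular) (hH0 : H0 𝔼)
    (ξ : ℕ → BM Ω) (hind : IndepSeq 𝔼 ξ) :
    (∃ N : Set Ω, MeasurableSet N ∧ 𝔼.cap N = 0 ∧ ∀ ω ∉ N,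
        ∃ l : ℝ, Tendsto (fun n => ∑ i ∈ Finset.Icc 1 n, (ξ i : Ω → ℝ) ω) atTop (𝓝 l)) ↔
    (∃ η : Ω → ℝ, Measurable η ∧ ∀ ε > 0, ∀ δ > 0, ∃ N₀ : ℕ, ∀ n ≥ N₀,
        𝔼.cap {ω | ε < |(∑ i ∈ Finset.Icc 1 n, (ξ i : Ω → ℝ) ω) - η ω|} < δ) := by
  classical
  set S : ℕ → Ω → ℝ := fun n ω => ∑ i ∈ Finset.Icc 1 n, (ξ i : Ω → ℝ) ω with hSdef
  have hSmeas : ∀ n, Measurable (S n) := fun n =>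
    Finset.measurable_sum _ fun i _ => BM.measurable (ξ i)
  constructor
  · rintro ⟨N, hNmeas, hNcap, hNconv⟩
    set η : Ω → ℝ := fun ω => (Filter.limsup (fun n => ((S n ω : ℝ) : EReal)) atTop).toReal
      with hηdef
    have hηmeas : Measurable η := measurable_ereal_toReal.comp
      (Measurable.limsup fun i => (hSmeas i).coe_real_ereal)
    have hηval : ∀ ω ∉ N, Tendsto (fun n => S n ω) atTop (𝓝 (η ω)) := by
      intro ω hω
      obtain ⟨l, hl⟩ := hNconv ω hω
      have hl' : Tendsto (fun n => S n ω) atTop (𝓝 l) := hl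
      have hc : Tendsto (fun n => ((S n ω : ℝ) : EReal)) atTop (𝓝 (l : EReal)) :=
        (continuous_coe_real_ereal.tendsto l).comp hl'
      have : η ω = l := by rw [hηdef]; simp only; rw [hc.limsup_eq, EReal.toReal_coe]
      rw [this]; exact hl'
    refine ⟨η, hηmeas, ?_⟩
    intro ε hε δ hδ
    set U : ℕ → Set Ω := fun n => ⋃ m, ⋃ (_ : n ≤ m), {ω | ε ≤ |S m ω - η ω|} with hU
    have hUmeas : ∀ n, MeasurableSet (U n) := fun n =>
      MeasurableSet.iUnion fun m => MeasurableSet.iUnion fun _ =>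
        measurableSet_le measurable_const ((hSmeas m).sub hηmeas).abs
    have hUanti : ∀ n, U (n + 1) ⊆ U n := by
      intro n ω hω
      simp only [hU, Set.mem_iUnion] at hω ⊢
      obtain ⟨m, hm, hωm⟩ := hω
      exact ⟨m, by omega, hωm⟩
    have hUanti' : Antitone U := antitone_nat_of_succ_le hUanti
    have hUmem : ∀ n ω, ω ∈ U n ↔ ∃ m, n ≤ m ∧ ε ≤ |S m ω - η ω| := by
      intro n ω
      simp only [hU, Set.mem_iUnion, Set.mem_setOf_eq]
      exact exists_congr fun m => exists_prop
    set ζ : ℕ → BM Ω := fun n => indBM (U n \ N) ((hUmeas n).diff hNmeas) with hζ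
    have hζanti : ∀ ω, Antitone fun n => (ζ n : Ω → ℝ) ω := by
      intro ω
      refine antitone_nat_of_succ_le fun n => ?_
      simp only [hζ]
      rw [indBM_apply, indBM_apply]
      by_cases h : ω ∈ U (n + 1) \ N
      · rw [if_pos h, if_pos ⟨hUanti n h.1, h.2⟩]
      · rw [if_neg h]; split <;> norm_num
    have hζto : ∀ ω, Tendsto (fun n => (ζ n : Ω → ℝ) ω) atTop (𝓝 0) := by
      intro ω
      by_cases hω : ω ∈ N
      · have : ∀ n, (ζ n : Ω → ℝ) ω = 0 := fun n =>
          indBM_of_not_mem fun h => h.2 hω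
        simpa [this] using tendsto_const_nhds (x := (0 : ℝ))
      · have hcv := hηval ω hω
        rw [Metric.tendsto_atTop] at hcv
        obtain ⟨n₀, hn₀⟩ := hcv ε hε
        refine tendsto_atTop_of_eventually_const (i₀ := n₀) fun n hn => ?_
        refine indBM_of_not_mem fun hmem => ?_
        obtain ⟨m, hm, hεm⟩ := (hUmem n ω).1 hmem.1
        have := hn₀ m (le_trans hn hm)
        rw [Real.dist_eq] at this
        linarith
    have hEto := hreg ζ hζanti hζto
    have hev : ∀ᶠ n in atTop, 𝔼.E (ζ n) < δ := hEto.eventually_lt_const hδ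
    obtain ⟨N₀, hN₀⟩ := hev.exists_forall_of_atTop
    refine ⟨N₀, fun n hn => ?_⟩
    have hTm : MeasurableSet {ω | ε < |S n ω - η ω|} :=
      measurableSet_lt measurable_const ((hSmeas n).sub hηmeas).abs
    have hle : 𝔼.cap {ω | ε < |S n ω - η ω|} ≤ 𝔼.E (ζ N₀ + indBM N hNmeas) := by
      rw [cap_eq 𝔼 _ hTm]
      refine E_mono 𝔼 fun ω => ?_
      have hcoe : ((ζ N₀ + indBM N hNmeas : BM Ω) : Ω → ℝ) ω =
          (ζ N₀ : Ω → ℝ) ω + (indBM N hNmeas : Ω → ℝ) ω := rfl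
      rw [hcoe]
      by_cases hω : ω ∈ {ω | ε < |S n ω - η ω|}
      · by_cases hωN : ω ∈ N
        · rw [indBM_of_mem hωN]
          have h1 := indBM_nonneg (U N₀ \ N) ((hUmeas N₀).diff hNmeas) ω
          have h2 := indBM_le_one {ω | ε < |S n ω - η ω|} hTm ω
          simp only [hζ]
          linarith
        · have hωU : ω ∈ U N₀ \ N := by
            refine ⟨(hUmem N₀ ω).2 ⟨n, hn, le_of_lt hω⟩, hωN⟩
          have h2 := indBM_le_one {ω | ε < |S n ω - η ω|} hTm ω
          have h3 := indBM_nonneg N hNmeas ω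
          simp only [hζ]
          rw [indBM_of_mem hωU]
          linarith
      · rw [indBM_of_not_mem hω]
        have h1 := indBM_nonneg (U N₀ \ N) ((hUmeas N₀).diff hNmeas) ω
        have h2 := indBM_nonneg N hNmeas ω
        simp only [hζ]
        linarith
    have hsplit : 𝔼.E (ζ N₀ + indBM N hNmeas) ≤ 𝔼.E (ζ N₀) + 𝔼.E (indBM N hNmeas) :=
      𝔼.subadd _ _
    have hNzero : 𝔼.E (indBM N hNmeas) = 0 := by
      rw [← cap_eq 𝔼 N hNmeas]; exact hNcap
    have := hN₀ N₀ le_rfl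
    calc 𝔼.cap {ω | ε < |S n ω - η ω|} ≤ 𝔼.E (ζ N₀) + 𝔼.E (indBM N hNmeas) :=
          hle.trans hsplit
      _ = 𝔼.E (ζ N₀) := by rw [hNzero, add_zero]
      _ < δ := this
  · rintro ⟨η, hηm, hconv⟩
    obtain ⟨K, hK⟩ := uniform_disjoint_bound 𝔼 hH0
    have hK0 : 0 ≤ K := by
      have := hK 0 (fun _ => ∅) (fun i hi => absurd hi (by omega))
        (fun i hi => absurd hi (by omega))
      simpa using this
    set T : ℝ → ℕ → Set Ω := fun ε N => ⋃ m, ⋃ (_ : N < m), {ω | 3 * ε < |S m ω - S N ω|}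
      with hTdef
    have hTmeas : ∀ ε N, MeasurableSet (T ε N) := fun ε N =>
      MeasurableSet.iUnion fun m => MeasurableSet.iUnion fun _ =>
        measurableSet_lt measurable_const ((hSmeas m).sub (hSmeas N)).abs
    have hTmem : ∀ ε N ω, ω ∈ T ε N ↔ ∃ m, N < m ∧ 3 * ε < |S m ω - S N ω| := by
      intro ε N ω
      simp only [hTdef, Set.mem_iUnion, Set.mem_setOf_eq]
      exact exists_congr fun m => exists_prop
    set Bad : Set Ω := ⋃ j : ℕ, ⋂ N : ℕ, T (1 / (j + 1)) N with hBaddef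
    have hBadm : MeasurableSet Bad :=
      MeasurableSet.iUnion fun j => MeasurableSet.iInter fun N => hTmeas _ N
    -- THE KEY (Lévy/Ottaviani-type) ESTIMATE
    have key : ∀ (L : BM Ω →ₗ[ℝ] ℝ), Dominated 𝔼 L → ∀ ε : ℝ, 0 < ε → ∀ γ : ℝ, 0 < γ →
        ∃ N : ℕ, L (indBM (T ε N) (hTmeas ε N)) ≤ γ := by
      intro L hL ε hε γ hγ
      set δ' : ℝ := γ / (4 * (1 + K)) with hδ'def
      have h1K : (0:ℝ) < 1 + K := by linarith
      have hδ'pos : 0 < δ' := by positivity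
      obtain ⟨N₁, hN₁⟩ := hconv (ε/2) (by positivity) δ' hδ'pos
      set N := max N₁ 1 with hNdef
      have hN1 : 1 ≤ N := le_max_right _ _
      have hNN₁ : N₁ ≤ N := le_max_left _ _
      have hcapdiff : ∀ c : ℝ, ε ≤ c → ∀ m M : ℕ, N ≤ m → N ≤ M →
          𝔼.cap {ω | c < |S M ω - S m ω|} ≤ 2 * δ' := by
        intro c hc m M hm hM
        have hm1 : MeasurableSet {ω | ε/2 < |S M ω - η ω|} :=
          measurableSet_lt measurable_const ((hSmeas M).sub hηm).abs
        have hm2 : MeasurableSet {ω | ε/2 < |S m ω - η ω|} :=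
          measurableSet_lt measurable_const ((hSmeas m).sub hηm).abs
        have hmc : MeasurableSet {ω | c < |S M ω - S m ω|} :=
          measurableSet_lt measurable_const ((hSmeas M).sub (hSmeas m)).abs
        have hsub : {ω | c < |S M ω - S m ω|} ⊆
            {ω | ε/2 < |S M ω - η ω|} ∪ {ω | ε/2 < |S m ω - η ω|} := by
          intro ω hω
          simp only [Set.mem_setOf_eq, Set.mem_union] at hω ⊢
          by_contra hcon
          push_neg at hcon
          have h1 : |S M ω - S m ω| ≤ |S M ω - η ω| + |S m ω - η ω| := by
            calc |S M ω - S m ω| = |(S M ω - η ω) - (S m ω - η ω)| := by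
                  rw [sub_sub_sub_cancel_right]
              _ ≤ |S M ω - η ω| + |S m ω - η ω| := abs_sub _ _
          linarith [hcon.1, hcon.2]
        calc 𝔼.cap {ω | c < |S M ω - S m ω|}
            ≤ 𝔼.cap ({ω | ε/2 < |S M ω - η ω|} ∪ {ω | ε/2 < |S m ω - η ω|}) :=
              cap_mono 𝔼 hmc (hm1.union hm2) hsub
          _ ≤ 𝔼.cap {ω | ε/2 < |S M ω - η ω|} + 𝔼.cap {ω | ε/2 < |S m ω - η ω|} :=
              cap_union_le 𝔼 hm1 hm2
          _ ≤ δ' + δ' := add_le_add (hN₁ M (hNN₁.trans hM)).le (hN₁ m (hNN₁.trans hm)).le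
          _ = 2 * δ' := by ring
      -- first-exceedance decomposition
      set A' : ℕ → Set Ω := fun m => {ω | 3*ε < |S m ω - S N ω|} ∩
        ⋂ k, ⋂ (_ : k ∈ Set.Ioo N m), {ω | |S k ω - S N ω| ≤ 3*ε} with hA'def
      have hA'meas : ∀ m, MeasurableSet (A' m) := fun m =>
        (measurableSet_lt measurable_const ((hSmeas m).sub (hSmeas N)).abs).inter
          (MeasurableSet.iInter fun k => MeasurableSet.iInter fun _ =>
            measurableSet_le ((hSmeas k).sub (hSmeas N)).abs measurable_const)
      have hA'mem : ∀ m ω, ω ∈ A' m ↔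
          (3*ε < |S m ω - S N ω| ∧ ∀ k, N < k → k < m → |S k ω - S N ω| ≤ 3*ε) := by
        intro m ω
        simp only [hA'def, Set.mem_inter_iff, Set.mem_setOf_eq, Set.mem_iInter, Set.mem_Ioo]
        constructor
        · rintro ⟨h1, h2⟩; exact ⟨h1, fun k hk hk' => h2 k ⟨hk, hk'⟩⟩
        · rintro ⟨h1, h2⟩; exact ⟨h1, fun k hk => h2 k hk.1 hk.2⟩
      have hA'disj : ∀ m m', N < m → N < m' → m ≠ m' → Disjoint (A' m) (A' m') := by
        have hmain : ∀ m m', N < m → m < m' → Disjoint (A' m) (A' m') := by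
          intro m m' hNm hmm'
          refine Set.disjoint_left.2 fun ω hω hω' => ?_
          have h1 := ((hA'mem m ω).1 hω).1
          have h2 := ((hA'mem m' ω).1 hω').2 m hNm hmm'
          linarith
        intro m m' hNm hNm' hne
        rcases lt_or_gt_of_ne hne with h | h
        · exact hmain m m' hNm h
        · exact (hmain m' m hNm' h).symm
      set TM : ℕ → Set Ω := fun M => ⋃ m, ⋃ (_ : m ∈ Set.Ioc N M), A' m with hTMdef
      have hTMmeas : ∀ M, MeasurableSet (TM M) := fun M =>
        MeasurableSet.iUnion fun m => MeasurableSet.iUnion fun _ => hA'meas m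
      have hTMmem : ∀ M ω, ω ∈ TM M ↔ ∃ m, N < m ∧ m ≤ M ∧ ω ∈ A' m := by
        intro M ω
        simp only [hTMdef, Set.mem_iUnion, Set.mem_Ioc]
        constructor
        · rintro ⟨m, ⟨h1, h2⟩, h3⟩; exact ⟨m, h1, h2, h3⟩
        · rintro ⟨m, h1, h2, h3⟩; exact ⟨m, ⟨h1, h2⟩, h3⟩
      have hTMmono : ∀ M, TM M ⊆ TM (M + 1) := by
        intro M ω hω
        obtain ⟨m, h1, h2, h3⟩ := (hTMmem M ω).1 hω
        exact (hTMmem (M+1) ω).2 ⟨m, h1, by omega, h3⟩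
      have hTMunion : (⋃ M, TM M) = T ε N := by
        ext ω
        simp only [Set.mem_iUnion]
        constructor
        · rintro ⟨M, hM⟩
          obtain ⟨m, h1, _, h3⟩ := (hTMmem M ω).1 hM
          exact (hTmem ε N ω).2 ⟨m, h1, ((hA'mem m ω).1 h3).1⟩
        · intro hω
          obtain ⟨m, hm1, hm2⟩ := (hTmem ε N ω).1 hω
          have hex : ∃ m, N < m ∧ 3*ε < |S m ω - S N ω| := ⟨m, hm1, hm2⟩
          classical
          let m₀ := Nat.find hex
          have hspec := Nat.find_spec hex
          refine ⟨m₀, (hTMmem m₀ ω).2 ⟨m₀, hspec.1, le_rfl, (hA'mem m₀ ω).2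
            ⟨hspec.2, fun k hk1 hk2 => ?_⟩⟩⟩
          by_contra hgt
          push_neg at hgt
          exact Nat.find_min hex hk2 ⟨hk1, hgt⟩
      -- uniform bound over finite horizons
      have hMbound : ∀ M : ℕ, L (indBM (TM M) (hTMmeas M)) ≤ γ / 2 := by
        intro M
        rcases le_or_gt M N with hMN | hNM
        · have hTMe : TM M = ∅ := by
            ext ω
            simp only [Set.mem_empty_iff_false, iff_false]
            intro hω
            obtain ⟨m, h1, h2, _⟩ := (hTMmem M ω).1 hω
            omega
          have h1 : L (indBM (TM M) (hTMmeas M)) ≤ 𝔼.cap (TM M) :=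
            L_ind_le_cap hL _ _
          have h2 : 𝔼.cap (TM M) = 0 := by rw [hTMe]; exact cap_empty 𝔼
          rw [h2] at h1
          have : (0:ℝ) < γ / 2 := by positivity
          linarith
        · set Bm : ℕ → Set Ω := fun m => {ω | ε < |S M ω - S m ω|} with hBmdef
          have hBmeas : ∀ m, MeasurableSet (Bm m) := fun m =>
            measurableSet_lt measurable_const ((hSmeas M).sub (hSmeas m)).abs
          set Em : ℕ → Set Ω := fun m => A' m ∩ (Bm m)ᶜ with hEmdef
          have hEmeas : ∀ m, MeasurableSet (Em m) := fun m =>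
            (hA'meas m).inter (hBmeas m).compl
          set D : Set Ω := {ω | 2*ε < |S M ω - S N ω|} with hDdef
          have hDmeas : MeasurableSet D :=
            measurableSet_lt measurable_const ((hSmeas M).sub (hSmeas N)).abs
          -- sums of partial sums measurable w.r.t. generated σ-algebras
          have hdiffm : ∀ a b k l : ℕ, 1 ≤ a → a ≤ l + 1 → l ≤ k → k ≤ b →
              Measurable[sigmaGen ξ a b] (fun ω => S k ω - S l ω) := by
            intro a b k l ha hal hlk hkb
            have heq : (fun ω => S k ω - S l ω) =
                fun ω => ∑ i ∈ Finset.Ioc l k, (ξ i : Ω → ℝ) ω := by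
              funext ω
              have hcons := Finset.sum_Ioc_consecutive (fun i => (ξ i : Ω → ℝ) ω)
                (Nat.zero_le l) hlk
              have h01 : ∀ r : ℕ, S r ω = ∑ i ∈ Finset.Ioc 0 r, (ξ i : Ω → ℝ) ω := by
                intro r
                show (∑ i ∈ Finset.Icc 1 r, (ξ i : Ω → ℝ) ω) = _
                rw [show Finset.Icc 1 r = Finset.Ioc 0 r from Finset.Icc_add_one_left_eq_Ioc 0 r]
              rw [h01 k, h01 l, ← hcons]
              ring
            rw [heq]
            refine measurable_sum_sigmaGen ξ a b _ fun i hi => ?_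
            rw [Finset.mem_Ioc] at hi
            exact Set.mem_Icc.2 ⟨by omega, by omega⟩
          -- step 1
          have hstep1 : L (indBM (TM M) (hTMmeas M)) ≤
              ∑ m ∈ Finset.Ioc N M, L (indBM (A' m) (hA'meas m)) := by
            rw [← map_sum]
            refine L_mono hL fun ω => ?_
            rw [coe_sum_apply]
            by_cases hω : ω ∈ TM M
            · obtain ⟨m₀, h1, h2, h3⟩ := (hTMmem M ω).1 hω
              calc (indBM (TM M) (hTMmeas M) : Ω → ℝ) ω ≤ 1 := indBM_le_one _ _ _
                _ = (indBM (A' m₀) (hA'meas m₀) : Ω → ℝ) ω := (indBM_of_mem h3).symm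
                _ ≤ _ := Finset.single_le_sum
                    (fun m _ => indBM_nonneg (A' m) (hA'meas m) ω)
                    (Finset.mem_Ioc.2 ⟨h1, h2⟩)
            · rw [indBM_of_not_mem hω]
              exact Finset.sum_nonneg fun m _ => indBM_nonneg (A' m) (hA'meas m) ω
          -- step 2
          have hstep2 : ∀ m ∈ Finset.Ioc N M, L (indBM (A' m) (hA'meas m)) ≤
              2*δ' * 𝔼.cap (A' m) + L (indBM (Em m) (hEmeas m)) := by
            intro m hm
            rw [Finset.mem_Ioc] at hm
            have hsplitm : L (indBM (A' m) (hA'meas m)) ≤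
                L (indBM (A' m ∩ Bm m) ((hA'meas m).inter (hBmeas m))) +
                L (indBM (Em m) (hEmeas m)) := by
              rw [← map_add]
              refine L_mono hL fun ω => ?_
              have hcoe : ((indBM (A' m ∩ Bm m) ((hA'meas m).inter (hBmeas m)) +
                  indBM (Em m) (hEmeas m) : BM Ω) : Ω → ℝ) ω =
                  (indBM (A' m ∩ Bm m) ((hA'meas m).inter (hBmeas m)) : Ω → ℝ) ω +
                  (indBM (Em m) (hEmeas m) : Ω → ℝ) ω := rfl
              rw [hcoe]
              by_cases hω : ω ∈ A' m
              · by_cases hωB : ω ∈ Bm m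
                · rw [indBM_of_mem (Set.mem_inter hω hωB)]
                  have := indBM_nonneg (Em m) (hEmeas m) ω
                  have := indBM_le_one (A' m) (hA'meas m) ω
                  linarith
                · rw [indBM_of_mem (show ω ∈ Em m from Set.mem_inter hω hωB)]
                  have := indBM_nonneg (A' m ∩ Bm m) ((hA'meas m).inter (hBmeas m)) ω
                  have := indBM_le_one (A' m) (hA'meas m) ω
                  linarith
              · rw [indBM_of_not_mem hω]
                have := indBM_nonneg (A' m ∩ Bm m) ((hA'meas m).inter (hBmeas m)) ω
                have := indBM_nonneg (Em m) (hEmeas m) ω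
                linarith
            have hcapAB : 𝔼.cap (A' m ∩ Bm m) ≤ 𝔼.cap (A' m) * 𝔼.cap (Bm m) := by
              rcases eq_or_lt_of_le hm.2 with hmM | hmM
              · have hBe : Bm m = ∅ := by
                  ext ω
                  simp only [hBmdef, Set.mem_setOf_eq, Set.mem_empty_iff_false, iff_false,
                    not_lt, hmM]
                  rw [← hmM, sub_self, abs_zero]
                  exact hε.le
                rw [hBe, Set.inter_empty, cap_empty, mul_zero]
              · refine hind.2 m M (hN1.trans hm.1.le) hmM (A' m) (Bm m) ?_ ?_
                · -- A' m measurable w.r.t. σ(ξ_1, …, ξ_m)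
                  refine MeasurableSet.inter ?_ ?_
                  · exact measurableSet_abslt_m (3*ε) (hdiffm 1 m m N le_rfl (by omega) hm.1.le le_rfl)
                  · refine MeasurableSet.iInter fun k => MeasurableSet.iInter fun hk => ?_
                    rw [Set.mem_Ioo] at hk
                    exact measurableSet_absle_m (3*ε)
                      (hdiffm 1 m k N le_rfl (by omega) hk.1.le (by omega))
                · exact measurableSet_abslt_m ε
                    (hdiffm (m+1) M M m (by omega) le_rfl (by omega) le_rfl)
            have hcapB : 𝔼.cap (Bm m) ≤ 2 * δ' :=
              hcapdiff ε le_rfl m M hm.1.le hNM.le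
            have hLAB : L (indBM (A' m ∩ Bm m) ((hA'meas m).inter (hBmeas m))) ≤
                2*δ' * 𝔼.cap (A' m) := by
              calc L (indBM (A' m ∩ Bm m) ((hA'meas m).inter (hBmeas m)))
                  ≤ 𝔼.cap (A' m ∩ Bm m) := L_ind_le_cap hL _ _
                _ ≤ 𝔼.cap (A' m) * 𝔼.cap (Bm m) := hcapAB
                _ ≤ 𝔼.cap (A' m) * (2*δ') :=
                    mul_le_mul_of_nonneg_left hcapB (cap_nonneg 𝔼 _)
                _ = 2*δ' * 𝔼.cap (A' m) := mul_comm _ _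
            linarith
          -- step 3
          have hEmD : ∀ m, N < m → m ≤ M → Em m ⊆ D := by
            intro m hNm hmM ω hω
            have h1 := ((hA'mem m ω).1 hω.1).1
            have h2 : ¬ (ε < |S M ω - S m ω|) := hω.2
            push_neg at h2
            simp only [hDdef, Set.mem_setOf_eq]
            have h3 : |S m ω - S N ω| ≤ |S M ω - S N ω| + |S M ω - S m ω| := by
              have heq : S m ω - S N ω = (S M ω - S N ω) - (S M ω - S m ω) := by ring
              rw [heq]
              exact abs_sub _ _
            linarith
          have hstep3 : ∑ m ∈ Finset.Ioc N M, L (indBM (Em m) (hEmeas m)) ≤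
              L (indBM D hDmeas) := by
            rw [← map_sum]
            refine L_mono hL fun ω => ?_
            rw [coe_sum_apply]
            by_cases hω : ∃ m ∈ Finset.Ioc N M, ω ∈ Em m
            · obtain ⟨m₀, hm₀s, hm₀⟩ := hω
              have hm₀' := Finset.mem_Ioc.1 hm₀s
              have hsum : ∑ m ∈ Finset.Ioc N M, (indBM (Em m) (hEmeas m) : Ω → ℝ) ω =
                  (indBM (Em m₀) (hEmeas m₀) : Ω → ℝ) ω := by
                refine Finset.sum_eq_single_of_mem m₀ hm₀s fun m hms hne => ?_
                have hm' := Finset.mem_Ioc.1 hms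
                refine indBM_of_not_mem fun hmem => ?_
                have hdisj := hA'disj m m₀ hm'.1 hm₀'.1 hne
                exact Set.disjoint_left.1 (hdisj.mono Set.inter_subset_left
                  Set.inter_subset_left) hmem hm₀
              rw [hsum, indBM_of_mem hm₀,
                indBM_of_mem (hEmD m₀ hm₀'.1 hm₀'.2 hm₀)]
            · push_neg at hω
              rw [Finset.sum_eq_zero fun m hm => indBM_of_not_mem (hω m hm)]
              exact indBM_nonneg D hDmeas ω
          -- step 4
          have hstep4 : ∑ m ∈ Finset.Ioc N M, 𝔼.cap (A' m) ≤ K := by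
            have happ := hK (M - N) (fun i => A' (N + 1 + i))
              (fun i _ => hA'meas _)
              (fun i _ j _ hij => hA'disj _ _ (by omega) (by omega) (by omega))
            have hreidx : ∑ m ∈ Finset.Ioc N M, 𝔼.cap (A' m) =
                ∑ i ∈ Finset.range (M - N), 𝔼.cap (A' (N + 1 + i)) := by
              rw [show Finset.Ioc N M = Finset.Ico (N+1) (M+1) from (Finset.Ico_add_one_add_one_eq_Ioc N M).symm,
                Finset.sum_Ico_eq_sum_range]
              have : M + 1 - (N + 1) = M - N := by omega
              rw [this]
            rw [hreidx]
            exact happ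
          -- step 5
          have hstep5 : L (indBM D hDmeas) ≤ 2 * δ' := by
            refine (L_ind_le_cap hL D hDmeas).trans ?_
            exact hcapdiff (2*ε) (by linarith) N M le_rfl hNM.le
          -- assemble
          have hsum2δ : 0 ≤ 2 * δ' := by positivity
          calc L (indBM (TM M) (hTMmeas M))
              ≤ ∑ m ∈ Finset.Ioc N M, L (indBM (A' m) (hA'meas m)) := hstep1
            _ ≤ ∑ m ∈ Finset.Ioc N M,
                  (2*δ' * 𝔼.cap (A' m) + L (indBM (Em m) (hEmeas m))) :=
                Finset.sum_le_sum hstep2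
            _ = 2*δ' * (∑ m ∈ Finset.Ioc N M, 𝔼.cap (A' m)) +
                  ∑ m ∈ Finset.Ioc N M, L (indBM (Em m) (hEmeas m)) := by
                rw [Finset.sum_add_distrib, Finset.mul_sum]
            _ ≤ 2*δ' * K + L (indBM D hDmeas) :=
                add_le_add (mul_le_mul_of_nonneg_left hstep4 hsum2δ) hstep3
            _ ≤ 2*δ' * K + 2*δ' := by linarith
            _ = γ / 2 := by
                rw [hδ'def]
                field_simp
                ring
      refine ⟨N, ?_⟩
      have hlim := L_cont_below hreg hL TM hTMmeas hTMmono (hTmeas ε N) hTMunion.symm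
      have hle := le_of_tendsto hlim (Filter.Eventually.of_forall hMbound)
      linarith
    refine ⟨Bad, hBadm, ?_, ?_⟩
    · -- cap Bad = 0
      refine le_antisymm ?_ (cap_nonneg 𝔼 Bad)
      obtain ⟨L, hL, hLeq⟩ := exists_dominated_eq 𝔼 (indBM Bad hBadm)
      rw [cap_eq 𝔼 Bad hBadm, ← hLeq]
      set D : ℕ → Set Ω := fun j => ⋂ N : ℕ, T (1 / (j + 1)) N with hDdef
      have hDm : ∀ j, MeasurableSet (D j) := fun j => MeasurableSet.iInter fun N => hTmeas _ N
      have hDzero : ∀ j, L (indBM (D j) (hDm j)) ≤ 0 := by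
        intro j
        have hεj : (0:ℝ) < 1 / (j + 1) := by positivity
        refine le_of_forall_pos_le_add fun γ hγ => ?_
        obtain ⟨N, hN⟩ := key L hL (1/(j+1)) hεj γ hγ
        have hsub : D j ⊆ T (1/(j+1)) N := Set.iInter_subset _ N
        have := L_ind_mono hL (hDm j) (hTmeas _ N) hsub
        linarith
      -- finite unions are L-null, pass to the limit
      set W : ℕ → Set Ω := fun J => ⋃ j, ⋃ (_ : j ≤ J), D j with hWdef
      have hWm : ∀ J, MeasurableSet (W J) := fun J =>
        MeasurableSet.iUnion fun j => MeasurableSet.iUnion fun _ => hDm j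
      have hWmem : ∀ J ω, ω ∈ W J ↔ ∃ j, j ≤ J ∧ ω ∈ D j := by
        intro J ω
        simp only [hWdef, Set.mem_iUnion]
        exact exists_congr fun j => exists_prop
      have hWmono : ∀ J, W J ⊆ W (J + 1) := by
        intro J ω hω
        obtain ⟨j, h1, h2⟩ := (hWmem J ω).1 hω
        exact (hWmem (J+1) ω).2 ⟨j, by omega, h2⟩
      have hWunion : Bad = ⋃ J, W J := by
        ext ω
        rw [hBaddef]
        simp only [Set.mem_iUnion]
        constructor
        · rintro ⟨j, hj⟩
          exact ⟨j, (hWmem j ω).2 ⟨j, le_rfl, hj⟩⟩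
        · rintro ⟨J, hJ⟩
          obtain ⟨j, _, hj⟩ := (hWmem J ω).1 hJ
          exact ⟨j, hj⟩
      have hunle : ∀ (X Y : Set Ω) (hX : MeasurableSet X) (hY : MeasurableSet Y),
          L (indBM (X ∪ Y) (hX.union hY)) ≤ L (indBM X hX) + L (indBM Y hY) := by
        intro X Y hX hY
        rw [← map_add]
        refine L_mono hL fun ω => ?_
        have hcoe : ((indBM X hX + indBM Y hY : BM Ω) : Ω → ℝ) ω =
            (indBM X hX : Ω → ℝ) ω + (indBM Y hY : Ω → ℝ) ω := rfl
        rw [hcoe, indBM_apply, indBM_apply, indBM_apply]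
        by_cases hω : ω ∈ X ∪ Y
        · rw [if_pos hω]
          rcases hω with h | h
          · rw [if_pos h]; split <;> norm_num
          · rw [if_pos h]; split <;> norm_num
        · rw [if_neg hω, if_neg (fun h => hω (Or.inl h)), if_neg (fun h => hω (Or.inr h))]
          norm_num
      have hWzero : ∀ J, L (indBM (W J) (hWm J)) ≤ 0 := by
        intro J
        induction J with
        | zero =>
            have hW0 : W 0 = D 0 := by
              ext ω
              rw [hWmem]
              constructor
              · rintro ⟨j, hj, h⟩
                rwa [Nat.le_zero.1 hj] at h
              · intro h; exact ⟨0, le_rfl, h⟩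
            calc L (indBM (W 0) (hWm 0)) = L (indBM (D 0) (hDm 0)) := by
                  rw [indBM_congr hW0 (hWm 0) (hDm 0)]
              _ ≤ 0 := hDzero 0
        | succ J ih =>
            have hWS : W (J + 1) = W J ∪ D (J + 1) := by
              ext ω
              rw [hWmem, Set.mem_union, hWmem]
              constructor
              · rintro ⟨j, hj, h⟩
                rcases Nat.lt_or_ge j (J + 1) with h' | h'
                · exact Or.inl ⟨j, by omega, h⟩
                · have : j = J + 1 := by omega
                  exact Or.inr (this ▸ h)
              · rintro (⟨j, hj, h⟩ | h)
                · exact ⟨j, by omega, h⟩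
                · exact ⟨J + 1, le_rfl, h⟩
            have h1 : L (indBM (W (J+1)) (hWm (J+1))) =
                L (indBM (W J ∪ D (J+1)) ((hWm J).union (hDm (J+1)))) := by
              rw [indBM_congr hWS (hWm (J+1)) ((hWm J).union (hDm (J+1)))]
            rw [h1]
            have := hunle (W J) (D (J+1)) (hWm J) (hDm (J+1))
            have := hDzero (J+1)
            linarith
      have hlim := L_cont_below hreg hL W hWm hWmono hBadm hWunion
      have := le_of_tendsto hlim (Filter.Eventually.of_forall hWzero)
      linarith
    · -- quasi-sure convergence outside Bad
      intro ω hω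
      have hωn : ∀ j : ℕ, ∃ N, ∀ m, N < m → |S m ω - S N ω| ≤ 3 * (1/((j:ℝ)+1)) := by
        intro j
        rw [hBaddef] at hω
        simp only [Set.mem_iUnion, not_exists] at hω
        have := hω j
        rw [Set.mem_iInter] at this
        push_neg at this
        obtain ⟨N, hN⟩ := this
        refine ⟨N, fun m hm => ?_⟩
        by_contra hgt
        push_neg at hgt
        exact hN ((hTmem _ N ω).2 ⟨m, hm, hgt⟩)
      have hcauchy : CauchySeq (fun n => S n ω) := by
        rw [Metric.cauchySeq_iff']
        intro ε' hε'
        obtain ⟨j, hj⟩ : ∃ j : ℕ, 3 * (1/((j:ℝ)+1)) < ε' := by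
          obtain ⟨j, hj⟩ := exists_nat_gt (3 / ε')
          refine ⟨j, ?_⟩
          rw [mul_one_div, div_lt_iff₀ (by positivity)]
          rw [div_lt_iff₀ hε'] at hj
          nlinarith
        obtain ⟨N, hN⟩ := hωn j
        refine ⟨N, fun n hn => ?_⟩
        rcases eq_or_lt_of_le hn with h | h
        · rw [← h]
          simpa using hε'
        · rw [Real.dist_eq]
          calc |S n ω - S N ω| ≤ 3 * (1/((j:ℝ)+1)) := hN n h
            _ < ε' := hj
      obtain ⟨l, hl⟩ := cauchySeq_tendsto_of_complete hcauchy
      exact ⟨l, hl⟩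
end
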